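/- Let D be a finite nonempty dataset. For each j ∈ D, let Y_j be a finite nonempty type of answers with ground truth gt_j ∈ Y_j, let μ_j be a probability measure on Y_j with strict mode y*_j (i.e., μ_j({y}) < μ_j({y*_j}) for all y ≠ y*_j), and let (Y_{j,i})_{i∈ℕ} be an i.i.d. sequence with distribution μ_j, all questions' sample sequences being mutually independent. For each n, let a_j(n) denote a majority-vote answer of question j from its first n samples (any y maximizing Σ_{i<n} 𝟙[Y_{j,i} = y]), and define Acc_D^n = (1/|D|) · Σ_{j∈D} 𝟙[a_j(n) = gt_j]. Then almost surely Acc_D^n converges, and its limit equals (1/|D|) · Σ_{j∈D} 𝟙[y*_j = gt_j]. -/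

import Mathlib

open MeasureTheory ProbabilityTheory Filter
open scoped Classical

/-- Insight 1 of the paper: almost surely, the self-consistency accuracy over a
finite dataset converges, and its limit is the accuracy of the true answer
distributions, i.e. the fraction of questions whose true top-1 answer (strict
mode) equals the ground truth. -/
theorem self_consistency_accuracy_tendsto_true_accuracy
    (D : Type*) [Fintype D] [Nonempty D]
    (Y : D → Type*) [∀ j, Fintype (Y j)] [∀ j, Nonempty (Y j)]
    [∀ j, MeasurableSpace (Y j)] [∀ j, MeasurableSingletonClass (Y j)]
    (gt : (j : D) → Y j)
    (μ : (j : D) → Measure (Y j)) [∀ j, IsProbabilityMeasure (μ j)]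
    (ystar : (j : D) → Y j)
    (hmode : ∀ j, ∀ y : Y j, y ≠ ystar j → μ j {y} < μ j {ystar j})
    (Ω : Type*) [MeasureSpace Ω] [IsProbabilityMeasure (ℙ : Measure Ω)]
    (X : (j : D) → ℕ → Ω → Y j)
    (hmeas : ∀ j i, Measurable (X j i))
    -- all samples, across all questions and sample indices, are mutually independent
    (hindep : iIndepFun (β := fun p : D × ℕ => Y p.1)
      (fun p => X p.1 p.2) ℙ)
    -- each question's samples are identically distributed with law `μ j`
    (hdist : ∀ j i, Measure.map (X j i) ℙ = μ j)
    -- `a j n ω` is a majority-vote answer: it maximizes the vote count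
    (a : (j : D) → ℕ → Ω → Y j)
    (ha : ∀ j n (ω : Ω) (y : Y j),
      (∑ i ∈ Finset.range n, (if X j i ω = y then (1 : ℕ) else 0))
        ≤ ∑ i ∈ Finset.range n, (if X j i ω = a j n ω then (1 : ℕ) else 0)) :
    ∀ᵐ ω ∂(ℙ : Measure Ω),
      Tendsto (fun n : ℕ =>
          ((1 : ℝ) / Fintype.card D) * ∑ j : D, (if a j n ω = gt j then (1 : ℝ) else 0))
        atTop
        (nhds (((1 : ℝ) / Fintype.card D) * ∑ j : D, (if ystar j = gt j then (1 : ℝ) else 0))) := by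
  -- Step 1: strong law for the indicator of each answer value
  have key : ∀ᵐ ω ∂(ℙ : Measure Ω), ∀ j : D, ∀ y : Y j,
      Tendsto (fun n : ℕ =>
          (∑ i ∈ Finset.range n, (if X j i ω = y then (1 : ℝ) else 0)) / n)
        atTop (nhds ((μ j {y}).toReal)) := by
    rw [ae_all_iff]
    intro j
    rw [ae_all_iff]
    intro y
    set g : Y j → ℝ := fun z => if z = y then 1 else 0 with hg
    have hgmeas : Measurable g := measurable_of_countable g
    set f : ℕ → Ω → ℝ := fun i ω => g (X j i ω) with hf
    have hfmeas : ∀ i, Measurable (f i) := fun i => hgmeas.comp (hmeas j i)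
    have hint : Integrable (f 0) ℙ := by
      apply Integrable.mono' (integrable_const (1 : ℝ)) (hfmeas 0).aestronglyMeasurable
      filter_upwards with ω
      simp only [hf, hg]
      split <;> simp
    have hpairwise : Pairwise (Function.onFun (IndepFun · · ℙ) f) := by
      intro i k hik
      exact (hindep.indepFun (i := (j, i)) (j := (j, k)) (by simp [hik])).comp hgmeas hgmeas
    have hident : ∀ i, IdentDistrib (f i) (f 0) ℙ ℙ := by
      intro i
      have h0 : IdentDistrib (X j i) (X j 0) ℙ ℙ :=
        ⟨(hmeas j i).aemeasurable, (hmeas j 0).aemeasurable, by rw [hdist, hdist]⟩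
      exact h0.comp hgmeas
    have hexp : (ℙ : Measure Ω)[f 0] = (μ j {y}).toReal := by
      have : (ℙ : Measure Ω)[f 0] = ∫ z, g z ∂(Measure.map (X j 0) ℙ) := by
        rw [integral_map (hmeas j 0).aemeasurable hgmeas.aestronglyMeasurable]
      rw [this, hdist]
      have : ∀ z, g z = Set.indicator {y} (fun _ => (1 : ℝ)) z := by
        intro z
        simp [hg, Set.indicator_apply]
      rw [integral_congr_ae (ae_of_all _ this), integral_indicator_const _
        (measurableSet_singleton y)]
      simp [Measure.real]
    have := strong_law_ae_real f hint hpairwise hident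
    rw [hexp] at this
    filter_upwards [this] with ω hω
    exact hω
  filter_upwards [key] with ω hω
  -- Step 2: eventually the majority answer equals the strict mode
  have hev : ∀ᶠ n in atTop, ∀ j : D, a j n ω = ystar j := by
    rw [eventually_all]
    intro j
    have hlt : ∀ᶠ n in atTop, ∀ y : Y j, y ≠ ystar j →
        (∑ i ∈ Finset.range n, (if X j i ω = y then (1 : ℕ) else 0))
          < ∑ i ∈ Finset.range n, (if X j i ω = ystar j then (1 : ℕ) else 0) := by
      rw [eventually_all]
      intro y
      rcases eq_or_ne y (ystar j) with h | h
      · filter_upwards with n hy; exact absurd h hy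
      · have hmu : (μ j {y}).toReal < (μ j {ystar j}).toReal := by
          apply ENNReal.toReal_lt_toReal (measure_ne_top _ _) (measure_ne_top _ _) |>.2
          exact hmode j y h
        have := (hω j y).eventually_lt (hω j (ystar j)) hmu
        filter_upwards [this, eventually_ge_atTop 1] with n hn hn1 _
        have hnpos : (0 : ℝ) < n := by exact_mod_cast hn1
        have hre : (∑ i ∈ Finset.range n, (if X j i ω = y then (1 : ℝ) else 0))
            < ∑ i ∈ Finset.range n, (if X j i ω = ystar j then (1 : ℝ) else 0) :=
          (div_lt_div_iff_of_pos_right hnpos).1 hn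
        have hc : ∀ z : Y j, ((∑ i ∈ Finset.range n,
            (if X j i ω = z then (1 : ℕ) else 0) : ℕ) : ℝ)
            = ∑ i ∈ Finset.range n, (if X j i ω = z then (1 : ℝ) else 0) := by
          intro z
          push_cast
          exact Finset.sum_congr rfl (fun i _ => by split <;> simp)
        exact_mod_cast (hc y) ▸ (hc (ystar j)) ▸ hre
    filter_upwards [hlt] with n hn
    by_contra hne
    exact absurd (ha j n ω (ystar j)) (not_le.2 (hn _ hne))
  -- Step 3: the accuracy is eventually constant
  apply Tendsto.congr' _ tendsto_const_nhds
  filter_upwards [hev] with n hn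
  congr 1
  exact Finset.sum_congr rfl (fun j _ => by rw [hn j])
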